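/- A finite directed graph D with at least two vertices is strongly connected if and only if it admits an ear decomposition, i.e., a sequence P₁,...,P_r of subdigraphs covering all vertices and arcs of D, where P₁ is a directed cycle and each P_i (i ≥ 2) is a directed ear with respect to the union H_{i−1} = P₁ ∪ ⋯ ∪ P_{i−1}: either a directed path whose endpoints lie in H_{i−1} and whose internal vertices are outside H_{i−1}, or a directed cycle intersecting H_{i−1} in exactly one vertex. -/

import Mathlib

variable {V : Type*} [Fintype V] [DecidableEq V]

/-- The vertex list of an ear from `a` to `b` with internal vertices `mid`. -/
def earList (a : V) (mid : List V) (b : V) : List V := a :: (mid ++ [b])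

/-- The arcs traversed by a list of vertices. -/
def arcsOf (l : List V) : List (V × V) := l.zip l.tail

/-- `EarDecomp D q S A` : the subdigraph with vertex set `S` and arc set `A` admits an ear
decomposition with exactly `q` ears, all arcs taken from `D`. The first ear is a directed
cycle; each further ear is a directed path whose endpoints lie in the current vertex set and
whose internal vertices are new and distinct (a directed cycle meeting the current graph in
exactly one vertex being the case `a = b`). -/
inductive EarDecomp (D : Finset (V × V)) : ℕ → Finset V → Finset (V × V) → Prop
  | cycle (a : V) (mid : List V) :
      (a :: mid).Nodup →
      (∀ e ∈ arcsOf (earList a mid a), e ∈ D) →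
      EarDecomp D 1 (earList a mid a).toFinset (arcsOf (earList a mid a)).toFinset
  | ear (q : ℕ) (S : Finset V) (A : Finset (V × V)) (a b : V) (mid : List V) :
      EarDecomp D q S A → a ∈ S → b ∈ S → mid.Nodup → (∀ v ∈ mid, v ∉ S) →
      (∀ e ∈ arcsOf (earList a mid b), e ∈ D) →
      EarDecomp D (q + 1) (S ∪ (earList a mid b).toFinset)
        (A ∪ (arcsOf (earList a mid b)).toFinset)


set_option linter.unusedSectionVars false

section helpers

variable {r : V → V → Prop}


variable {r : V → V → Prop}

lemma arcsOf_cons_cons (x c : V) (t : List V) :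
    arcsOf (x :: c :: t) = (x, c) :: arcsOf (c :: t) := rfl

lemma chain_of_arcs : ∀ {x : V} {t : List V},
    (∀ e ∈ arcsOf (x :: t), r e.1 e.2) → List.Chain r x t
  | _, [], _ => List.Chain.nil
  | x, c :: t, h =>
    List.Chain.cons (h (x, c) (by rw [arcsOf_cons_cons]; exact List.mem_cons_self))
      (chain_of_arcs fun e he => h e (by rw [arcsOf_cons_cons]; exact List.mem_cons_of_mem _ he))

lemma arcs_of_chain : ∀ {x : V} {t : List V}, List.Chain r x t →
    ∀ e ∈ arcsOf (x :: t), r e.1 e.2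
  | _, [], _, e, he => by simp [arcsOf] at he
  | x, c :: t, h, e, he => by
    rw [arcsOf_cons_cons] at he
    rcases List.mem_cons.1 he with rfl | he
    · exact (List.chain_cons.1 h).1
    · exact arcs_of_chain (List.chain_cons.1 h).2 e he

lemma reach_head {x : V} {t : List V} (h : List.Chain r x t) :
    ∀ y ∈ x :: t, Relation.ReflTransGen r x y := by
  induction t generalizing x with
  | nil => intro y hy; simp at hy; subst hy; exact .refl
  | cons c t ih =>
    intro y hy
    rcases List.mem_cons.1 hy with rfl | hy
    · exact .refl
    · exact .head (List.chain_cons.1 h).1 (ih (List.chain_cons.1 h).2 y hy)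

lemma reach_last {x : V} {t : List V} (h : List.Chain r x t) :
    ∀ y ∈ x :: t, Relation.ReflTransGen r y ((x :: t).getLast (by simp)) := by
  induction t generalizing x with
  | nil => intro y hy; simp at hy; subst hy; exact .refl
  | cons c t ih =>
    intro y hy
    have hlast : (x :: c :: t).getLast (by simp) = (c :: t).getLast (by simp) :=
      List.getLast_cons (by simp)
    rw [hlast]
    rcases List.mem_cons.1 hy with rfl | hy
    · exact .head (List.chain_cons.1 h).1 (ih (List.chain_cons.1 h).2 _ (List.mem_cons_self))
    · exact ih (List.chain_cons.1 h).2 y hy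

lemma chain_suffix {c : V} {l : List V} (h : List.Chain r c l) :
    ∀ y ∈ c :: l, ∃ l', List.Chain r y l' ∧ (y :: l') <:+ (c :: l) ∧
      (y :: l').getLast (by simp) = (c :: l).getLast (by simp) := by
  induction l generalizing c with
  | nil =>
    intro y hy; simp at hy; subst hy
    exact ⟨[], .nil, List.suffix_refl _, rfl⟩
  | cons d t ih =>
    intro y hy
    rcases List.mem_cons.1 hy with rfl | hy
    · exact ⟨d :: t, h, List.suffix_refl _, rfl⟩
    · obtain ⟨l', h1, h2, h3⟩ := ih (List.chain_cons.1 h).2 y hy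
      refine ⟨l', h1, h2.trans (List.suffix_cons _ _), ?_⟩
      rw [h3]; exact (List.getLast_cons (by simp)).symm


lemma earList_getLast (a b : V) (mid : List V) :
    (earList a mid b).getLast (by simp [earList]) = b := by
  show ((a :: mid) ++ [b]).getLast (by simp) = b
  exact List.getLast_concat

lemma reach_to_set (S : Finset V) {y a : V} (h : Relation.ReflTransGen r y a) (ha : a ∈ S) :
    y ∉ S → ∃ mid z, (y :: mid).Nodup ∧ (∀ v ∈ y :: mid, v ∉ S) ∧ z ∈ S ∧
      List.Chain r y (mid ++ [z]) := by
  induction h using Relation.ReflTransGen.head_induction_on with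
  | refl => exact fun hy => absurd ha hy
  | head hxc hcw ih =>
    rename_i x c
    intro hx
    by_cases hc : c ∈ S
    · exact ⟨[], c, by simp, by simpa using hx, hc, List.chain_cons.2 ⟨hxc, List.isChain_singleton c⟩⟩
    · obtain ⟨mid, z, hnd, hns, hz, hch⟩ := ih hc
      by_cases hxm : x ∈ c :: mid
      · -- shorten: x occurs in the path from c
        have hxl : x ∈ c :: (mid ++ [z]) := by
          rcases List.mem_cons.1 hxm with rfl | hm
          · exact List.mem_cons_self
          · exact List.mem_cons_of_mem _ (List.mem_append_left _ hm)
        obtain ⟨l', h1, h2, h3⟩ := chain_suffix hch x hxl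
        have hzne : z ∉ c :: mid := fun hmem => hns z hmem hz
        have hndfull : (c :: (mid ++ [z])).Nodup := by
          rw [show c :: (mid ++ [z]) = (c :: mid) ++ [z] from rfl, List.nodup_append]
          exact ⟨hnd, List.nodup_singleton z,
            fun w hw w2 hw2 heq => hzne (by rw [List.mem_singleton] at hw2; subst hw2; subst heq; exact hw)⟩
        have hndxl : (x :: l').Nodup := h2.sublist.nodup hndfull
        have hlastz : (c :: (mid ++ [z])).getLast (by simp) = z := by
          show ((c :: mid) ++ [z]).getLast (by simp) = z
          exact List.getLast_concat
        have hl'ne : l' ≠ [] := by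
          rintro rfl
          simp at h3
          exact hx (h3 ▸ hz)
        have hgl : l'.getLast hl'ne = z := by
          rw [← List.getLast_cons (a := x) hl'ne, h3, hlastz]
        have hl'eq : l'.dropLast ++ [z] = l' := by
          rw [← hgl]; exact List.dropLast_append_getLast hl'ne
        refine ⟨l'.dropLast, z, ?_, ?_, hz, ?_⟩
        · exact ((l'.dropLast_sublist.cons_cons x)).nodup hndxl
        · intro v hv
          rcases List.mem_cons.1 hv with rfl | hv
          · exact hx
          · have hvl' : v ∈ l' := l'.dropLast_sublist.mem hv
            have hvfull : v ∈ c :: (mid ++ [z]) := h2.sublist.mem (List.mem_cons_of_mem _ hvl')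
            have hvz : v ≠ z := by
              rintro rfl
              have : l'.Nodup := hndxl.of_cons
              rw [← hl'eq, List.nodup_append] at this
              exact this.2.2 _ hv _ (List.mem_singleton_self _) rfl
            have : v ∈ c :: mid := by
              rcases List.mem_cons.1 hvfull with rfl | hv2
              · exact List.mem_cons_self
              · rcases List.mem_append.1 hv2 with hv3 | hv3
                · exact List.mem_cons_of_mem _ hv3
                · exact absurd (List.mem_singleton.1 hv3) hvz
            exact hns v this
        · rw [hl'eq]; exact h1
      · refine ⟨c :: mid, z, List.nodup_cons.2 ⟨hxm, hnd⟩, ?_, hz, List.chain_cons.2 ⟨hxc, hch⟩⟩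
        intro v hv
        rcases List.mem_cons.1 hv with rfl | hv
        · exact hx
        · exact hns v hv

lemma exists_cross (S : Finset V) {a v : V} (h : Relation.ReflTransGen r a v) (ha : a ∈ S) :
    v ∉ S → ∃ x y, x ∈ S ∧ y ∉ S ∧ r x y := by
  induction h with
  | refl => exact fun hv => absurd ha hv
  | tail hab hbc ih =>
    rename_i b c
    intro hv
    by_cases hb : b ∈ S
    · exact ⟨b, c, hb, hv, hbc⟩
    · exact ih hb


end helpers

lemma EarDecomp.base_nonempty {D : Finset (V × V)} {q : ℕ} {S : Finset V} {A : Finset (V × V)}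
    (h : EarDecomp D q S A) : S.Nonempty := by
  induction h with
  | cycle a mid hnd harcs => exact ⟨a, by simp [earList]⟩
  | ear q S A a b mid hprev ha hb hnd hns harcs ih => exact ih.mono Finset.subset_union_left

lemma EarDecomp.arcs_subset {D : Finset (V × V)} {q : ℕ} {S : Finset V} {A : Finset (V × V)}
    (h : EarDecomp D q S A) : A ⊆ D := by
  induction h with
  | cycle a mid hnd harcs =>
    intro e he; exact harcs e (List.mem_toFinset.1 he)
  | ear q S A a b mid hprev ha hb hnd hns harcs ih =>
    intro e he
    rcases Finset.mem_union.1 he with he | he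
    · exact ih he
    · exact harcs e (List.mem_toFinset.1 he)

lemma EarDecomp.strongOn {D : Finset (V × V)} {q : ℕ} {S : Finset V} {A : Finset (V × V)}
    (h : EarDecomp D q S A) :
    ∀ u ∈ S, ∀ v ∈ S, Relation.ReflTransGen (fun a b => (a, b) ∈ A) u v := by
  induction h with
  | cycle a mid hnd harcs =>
    intro u hu v hv
    rw [List.mem_toFinset] at hu hv
    have hch : List.Chain (fun x y => (x, y) ∈ (arcsOf (earList a mid a)).toFinset)
        a (mid ++ [a]) := chain_of_arcs fun e he => by
      rw [List.mem_toFinset]; exact he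
    have h1 := reach_last hch u hu
    rw [show ((a :: (mid ++ [a])).getLast (by simp)) = a from earList_getLast a a mid] at h1
    exact h1.trans (reach_head hch v hv)
  | ear q S A a b mid hprev ha hb hnd hns harcs ih =>
    intro u hu v hv
    set B := (arcsOf (earList a mid b)).toFinset with hB
    have hch : List.Chain (fun x y => (x, y) ∈ A ∪ B) a (mid ++ [b]) :=
      chain_of_arcs fun e he => by
        refine Finset.mem_union_right _ ?_
        rw [hB, List.mem_toFinset]; exact he
    have hmono : ∀ {x y : V}, Relation.ReflTransGen (fun p q => (p, q) ∈ A) x y →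
        Relation.ReflTransGen (fun p q => (p, q) ∈ A ∪ B) x y :=
      fun h => Relation.ReflTransGen.mono (p := fun p q => (p, q) ∈ A ∪ B) (fun p q hpq => Finset.mem_union_left _ hpq) _ _ h
    have hub : Relation.ReflTransGen (fun p q => (p, q) ∈ A ∪ B) u b := by
      rcases Finset.mem_union.1 hu with h1 | h1
      · exact hmono (ih u h1 b hb)
      · rw [List.mem_toFinset] at h1
        have h2 := reach_last hch u h1
        rwa [show ((a :: (mid ++ [b])).getLast (by simp)) = b from earList_getLast a b mid] at h2
    have hav : Relation.ReflTransGen (fun p q => (p, q) ∈ A ∪ B) a v := by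
      rcases Finset.mem_union.1 hv with h1 | h1
      · exact hmono (ih a ha v h1)
      · rw [List.mem_toFinset] at h1
        exact reach_head hch v h1
    exact hub.trans ((hmono (ih b hb a ha)).trans hav)

lemma EarDecomp.grow {D : Finset (V × V)}
    (hsc : ∀ u v : V, Relation.ReflTransGen (fun a b => (a, b) ∈ D) u v) :
    ∀ (n q : ℕ) (S : Finset V) (A : Finset (V × V)), (Finset.univ \ S).card ≤ n →
      EarDecomp D q S A → ∃ q' A', EarDecomp D q' Finset.univ A' := by
  intro n
  induction n with
  | zero =>
    intro q S A hcard h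
    have h0 : Finset.univ \ S = ∅ := Finset.card_eq_zero.1 (Nat.le_zero.1 hcard)
    have hS : S = Finset.univ :=
      Finset.eq_univ_of_forall fun x => by
        by_contra hx
        exact absurd (h0 ▸ Finset.mem_sdiff.2 ⟨Finset.mem_univ x, hx⟩) (Finset.notMem_empty x)
    exact ⟨q, A, hS ▸ h⟩
  | succ n ih =>
    intro q S A hcard h
    by_cases hS : S = Finset.univ
    · exact ⟨q, A, hS ▸ h⟩
    · obtain ⟨v, hv⟩ : ∃ v, v ∉ S := by
        by_contra hc; push_neg at hc
        exact hS (Finset.eq_univ_of_forall hc)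
      obtain ⟨a0, ha0⟩ := h.base_nonempty
      obtain ⟨x, w, hx, hw, hxw⟩ := exists_cross S (hsc a0 v) ha0 hv
      obtain ⟨mid, z, hnd, hns, hz, hch⟩ := reach_to_set S (hsc w a0) ha0 hw
      have harcs : ∀ e ∈ arcsOf (earList x (w :: mid) z), e ∈ D := by
        have hch2 : List.Chain (fun p q => (p, q) ∈ D) x ((w :: mid) ++ [z]) :=
          List.chain_cons.2 ⟨hxw, hch⟩
        intro e he
        simpa using arcs_of_chain hch2 e he
      have hd := EarDecomp.ear q S A x z (w :: mid) h hx hz hnd hns harcs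
      refine ih (q + 1) _ _ ?_ hd
      have hw' : w ∈ S ∪ (earList x (w :: mid) z).toFinset := by simp [earList]
      have hsub : Finset.univ \ (S ∪ (earList x (w :: mid) z).toFinset) ⊆ Finset.univ \ S :=
        Finset.sdiff_subset_sdiff (le_refl _) Finset.subset_union_left
      have hlt := Finset.card_lt_card ((Finset.ssubset_iff_of_subset hsub).2
        ⟨w, Finset.mem_sdiff.2 ⟨Finset.mem_univ _, hw⟩,
          fun hc => (Finset.mem_sdiff.1 hc).2 hw'⟩)
      omega

lemma EarDecomp.fill {D : Finset (V × V)} :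
    ∀ (n q : ℕ) (A : Finset (V × V)), (D \ A).card ≤ n → EarDecomp D q Finset.univ A →
      ∃ q', EarDecomp D q' Finset.univ D := by
  intro n
  induction n with
  | zero =>
    intro q A hcard h
    have h0 : D \ A = ∅ := Finset.card_eq_zero.1 (Nat.le_zero.1 hcard)
    have hA : A = D := Finset.Subset.antisymm h.arcs_subset
      (Finset.sdiff_eq_empty_iff_subset.1 h0)
    exact ⟨q, hA ▸ h⟩
  | succ n ih =>
    intro q A hcard h
    by_cases hDA : D ⊆ A
    · exact ⟨q, (Finset.Subset.antisymm h.arcs_subset hDA) ▸ h⟩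
    · obtain ⟨e, heD, heA⟩ := Finset.not_subset.1 hDA
      obtain ⟨a, b⟩ := e
      have harcs : ∀ e' ∈ arcsOf (earList a [] b), e' ∈ D := by
        intro e' he'
        have : e' = (a, b) := by simpa [earList, arcsOf] using he'
        exact this ▸ heD
      have hd := EarDecomp.ear q Finset.univ A a b [] h (Finset.mem_univ a)
        (Finset.mem_univ b) List.nodup_nil (by simp) harcs
      rw [show Finset.univ ∪ (earList a [] b).toFinset = Finset.univ from by simp] at hd
      refine ih (q + 1) _ ?_ hd
      have hmem : (a, b) ∈ (arcsOf (earList a [] b)).toFinset := by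
        simp [earList, arcsOf]
      have hsub : D \ (A ∪ (arcsOf (earList a [] b)).toFinset) ⊆ D \ A :=
        Finset.sdiff_subset_sdiff (le_refl _) Finset.subset_union_left
      have hlt := Finset.card_lt_card ((Finset.ssubset_iff_of_subset hsub).2
        ⟨(a, b), Finset.mem_sdiff.2 ⟨heD, heA⟩,
          fun hc => (Finset.mem_sdiff.1 hc).2 (Finset.mem_union_right _ hmem)⟩)
      omega


/-- A finite digraph with at least two vertices is strongly connected iff it admits an ear
decomposition covering all its vertices and arcs. -/
theorem stmt_4 (D : Finset (V × V)) (h2 : 2 ≤ Fintype.card V) :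
    (∀ u v : V, Relation.ReflTransGen (fun a b => (a, b) ∈ D) u v) ↔
      ∃ q : ℕ, EarDecomp D q Finset.univ D := by
  constructor
  · intro hsc
    obtain ⟨u, v, huv⟩ := Fintype.exists_pair_of_one_lt_card (α := V) (by omega)
    rcases (hsc u v).cases_head with rfl | ⟨c, huc, hcv⟩
    · exact absurd rfl huv
    · have base : ∃ q S A, EarDecomp D q S A := by
        by_cases hc : c = u
        · subst hc
          refine ⟨1, _, _, EarDecomp.cycle c [] (by simp) ?_⟩
          intro e he
          have : e = (c, c) := by simpa [earList, arcsOf] using he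
          exact this ▸ huc
        · obtain ⟨mid, z, hnd, hns, hz, hch⟩ :=
            reach_to_set {u} (hcv.trans (hsc v u)) (Finset.mem_singleton_self u)
              (by simp [hc])
          have hzu : z = u := Finset.mem_singleton.1 hz
          subst hzu
          refine ⟨1, _, _, EarDecomp.cycle z (c :: mid) ?_ ?_⟩
          · exact List.nodup_cons.2 ⟨fun hmem => (hns z hmem) (Finset.mem_singleton_self z), hnd⟩
          · intro e he
            have hch2 : List.Chain (fun p q => (p, q) ∈ D) z ((c :: mid) ++ [z]) :=
              List.chain_cons.2 ⟨huc, hch⟩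
            simpa using arcs_of_chain hch2 e he
      obtain ⟨q, S, A, hbase⟩ := base
      obtain ⟨q', A', huniv⟩ := EarDecomp.grow hsc _ q S A (le_refl _) hbase
      exact EarDecomp.fill _ q' A' (le_refl _) huniv
  · rintro ⟨q, hq⟩ u v
    exact hq.strongOn u (Finset.mem_univ u) v (Finset.mem_univ v)
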